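/- A Laurent polynomial f satisfies T_1 f = −ab·f if and only if f is symmetric, i.e. f[z] = f[z^{-1}]. -/

import Mathlib

open scoped BigOperators

noncomputable section

/-- The field of rational functions over ℂ, in which Laurent polynomials live. -/
local notation "F" => RatFunc ℂ

/-- Scalar constants in `F`. -/
def Cc (x : ℂ) : F := RatFunc.C x

/-- The variable `z`. -/
def Xv : F := RatFunc.X

/-- Substitution `z ↦ t` in a rational function (well defined since the
substitution points used here are transcendental over ℂ). -/
def subst (t : F) (f : F) : F := RatFunc.eval (RatFunc.C) t f

/-- `f` is a Laurent polynomial in `z`. -/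
def IsLaurent (f : F) : Prop :=
  ∃ (p : Polynomial ℂ) (n : ℕ), f = algebraMap (Polynomial ℂ) F p / Xv ^ n

/-- The DAHA operator `T₁` of the basic representation. -/
def T1op (a b : ℂ) (f : F) : F :=
  ((Cc a + Cc b) * Xv - (1 + Cc a * Cc b)) / (1 - Xv ^ 2) * f
    + ((1 - Cc a * Xv) * (1 - Cc b * Xv)) / (1 - Xv ^ 2) * subst Xv⁻¹ f

/-- The DAHA operator `T₀` of the basic representation. -/
def T0op (q c d : ℂ) (f : F) : F :=
  (Cc q)⁻¹ * Xv * ((Cc c * Cc d + Cc q) * Xv - (Cc c + Cc d) * Cc q) / (Cc q - Xv ^ 2) * f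
    - ((Cc c - Xv) * (Cc d - Xv)) / (Cc q - Xv ^ 2) * subst (Cc q * Xv⁻¹) f

/-- The inverse of `T₁`: `T₁⁻¹ = -(ab)⁻¹T₁ - (1 + (ab)⁻¹)`. -/
def T1inv (a b : ℂ) (f : F) : F :=
  -(Cc a * Cc b)⁻¹ * T1op a b f - (1 + (Cc a * Cc b)⁻¹) * f

/-- The inverse of `T₀`: `T₀⁻¹ = -q(cd)⁻¹T₀ - (1 + q(cd)⁻¹)`. -/
def T0inv (q c d : ℂ) (f : F) : F :=
  -(Cc q * (Cc c * Cc d)⁻¹) * T0op q c d f - (1 + Cc q * (Cc c * Cc d)⁻¹) * f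

/-- `Y = T₁T₀`. -/
def Yop (q a b c d : ℂ) (f : F) : F := T1op a b (T0op q c d f)

/-- `Y⁻¹ = T₀⁻¹T₁⁻¹`. -/
def Yinv (q a b c d : ℂ) (f : F) : F := T0inv q c d (T1inv a b f)

/-- `D = Y + q⁻¹abcd·Y⁻¹`. -/
def Dop (q a b c d : ℂ) (f : F) : F :=
  Yop q a b c d f + Cc (q⁻¹ * (a * b * c * d)) * Yinv q a b c d f

/-- The Askey–Wilson second order q-difference operator `D_sym`. -/
def DsymOp (q a b c d : ℂ) (f : F) : F :=
  ((1 - Cc a * Xv) * (1 - Cc b * Xv) * (1 - Cc c * Xv) * (1 - Cc d * Xv)) /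
      ((1 - Xv ^ 2) * (1 - Cc q * Xv ^ 2)) * (subst (Cc q * Xv) f - f)
    + ((Cc a - Xv) * (Cc b - Xv) * (Cc c - Xv) * (Cc d - Xv)) /
      ((1 - Xv ^ 2) * (Cc q - Xv ^ 2)) * (subst ((Cc q)⁻¹ * Xv) f - f)
    + (1 + (Cc q)⁻¹ * Cc a * Cc b * Cc c * Cc d) * f

/-- q-Pochhammer symbol `(x;q)_k`. -/
def qPoch (x q : ℂ) (k : ℕ) : ℂ := ∏ j ∈ Finset.range k, (1 - x * q ^ j)

/-- The monic Askey–Wilson Laurent polynomial `P_n[z;a,b,c,d|q]`. -/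
def AWP (q a b c d : ℂ) (n : ℕ) : F :=
  Cc (a⁻¹ ^ n) * ∑ k ∈ Finset.range (n + 1),
    Cc (qPoch (q⁻¹ ^ n) q k * qPoch (a * b * q ^ k) q (n - k) * qPoch (a * c * q ^ k) q (n - k)
        * qPoch (a * d * q ^ k) q (n - k) * q ^ k
        / (qPoch q q k * qPoch (a * b * c * d * q ^ (n + k) / q) q (n - k)))
      * (∏ j ∈ Finset.range k, (1 - Cc a * Xv * Cc (q ^ j)))
      * (∏ j ∈ Finset.range k, (1 - Cc a * Xv⁻¹ * Cc (q ^ j)))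

/-- `Q_n[z] := (ab)⁻¹ z⁻¹ (1-az)(1-bz) P_{n-1}[z;qa,qb,c,d|q]`. -/
def Qpoly (q a b c d : ℂ) (n : ℕ) : F :=
  (Cc (a * b))⁻¹ * Xv⁻¹ * (1 - Cc a * Xv) * (1 - Cc b * Xv) *
    AWP q (q * a) (q * b) c d (n - 1)

/-- Elementary symmetric polynomials in a,b,c,d. -/
def esym1 (a b c d : ℂ) : ℂ := a + b + c + d
def esym2 (a b c d : ℂ) : ℂ := a*b + a*c + b*c + a*d + b*d + c*d
def esym3 (a b c d : ℂ) : ℂ := a*b*c + a*b*d + a*c*d + b*c*d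
def esym4 (a b c d : ℂ) : ℂ := a*b*c*d


theorem stmt5 (q a b : ℂ) (hq : q ≠ 0) (hroot : ∀ m : ℕ, 1 ≤ m → q ^ m ≠ 1)
    (ha : a ≠ 0) (hb : b ≠ 0) :
    ∀ f : RatFunc ℂ, IsLaurent f →
      (T1op a b f = -(Cc (a * b)) * f ↔ subst Xv⁻¹ f = f) := by
  intro f _
  set g := subst Xv⁻¹ f with hg
  have hD : (1 : F) - Xv ^ 2 ≠ 0 := by
    have hp : ((1 : Polynomial ℂ) - Polynomial.X ^ 2) ≠ 0 := by
      intro h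
      have := congrArg (fun p => Polynomial.coeff p 2) h
      simp [Polynomial.coeff_one] at this
    have h2 : (1 : F) - Xv ^ 2
        = algebraMap (Polynomial ℂ) F (1 - Polynomial.X ^ 2) := by
      simp [Xv, RatFunc.algebraMap_X]
    rw [h2]
    exact (map_ne_zero_iff _ (RatFunc.algebraMap_injective ℂ)).mpr hp
  have key : ∀ c : ℂ, (1 : F) - Cc c * Xv ≠ 0 := by
    intro c
    have hp : ((1 : Polynomial ℂ) - Polynomial.C c * Polynomial.X) ≠ 0 := by
      intro h
      have := congrArg (fun p => Polynomial.coeff p 0) h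
      simp at this
    have h2 : (1 : F) - Cc c * Xv
        = algebraMap (Polynomial ℂ) F (1 - Polynomial.C c * Polynomial.X) := by
      simp [Xv, Cc, RatFunc.algebraMap_X, RatFunc.algebraMap_C]
    rw [h2]
    exact (map_ne_zero_iff _ (RatFunc.algebraMap_injective ℂ)).mpr hp
  have hQ : ((1 : F) - Cc a * Xv) * (1 - Cc b * Xv) / (1 - Xv ^ 2) ≠ 0 :=
    div_ne_zero (mul_ne_zero (key a) (key b)) hD
  have hab : Cc (a * b) = Cc a * Cc b := by simp [Cc, map_mul]
  have hsum : ((Cc a + Cc b) * Xv - (1 + Cc a * Cc b)) / (1 - Xv ^ 2)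
      + ((1 : F) - Cc a * Xv) * (1 - Cc b * Xv) / (1 - Xv ^ 2) = -(Cc (a * b)) := by
    rw [← add_div, div_eq_iff hD, hab]; ring
  unfold T1op
  rw [← hg]
  constructor
  · intro h
    have h2 : ((1 - Cc a * Xv) * (1 - Cc b * Xv) / (1 - Xv ^ 2)) * g
        = ((1 - Cc a * Xv) * (1 - Cc b * Xv) / (1 - Xv ^ 2)) * f := by
      linear_combination h - f * hsum
    exact mul_left_cancel₀ hQ h2
  · intro h
    rw [h]
    linear_combination f * hsum

end
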